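/- Let (a_n)_{n≥0}, (b_n)_{n≥1} be reals with a_0 = 1, a_n > 0, satisfying a_m = ∑_{n=1}^m b_n a_{m−n} for all m ≥ 1. Fix N ≥ 1 and let S = (S_1,…,S_d) be the compression of the multiplication tuple M_z to the space P_N of polynomials of degree ≤ N with the inner product ⟨z^α,z^β⟩ = δ_{αβ}(1/a_{|α|})(α!/|α|!). Then I − ∑_{n=1}^N b_n ∑_{|α|=n} (n!/α!) S^α (S*)^α equals the orthogonal projection onto the constants ℂ·1; in particular it is positive semidefinite. -/

import Mathlib

open scoped ComplexOrder

/-- The unitarily invariant inner product on polynomials determined by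
`⟨zᵅ, zᵝ⟩ = δ_{αβ} (1/a_{|α|}) α!/|α|!` (conjugate-linear in the first argument). -/
noncomputable def uiInner (d : ℕ) (a : ℕ → ℝ) (p q : MvPolynomial (Fin d) ℂ) : ℂ :=
  ∑ α ∈ p.support ∪ q.support,
    (starRingEnd ℂ) (MvPolynomial.coeff α p) * MvPolynomial.coeff α q *
      ((((∏ j, Nat.factorial (α j) : ℕ) : ℝ) / (Nat.factorial (∑ j, α j)) / a (∑ j, α j) : ℝ) : ℂ)

namespace Stmt18Aux

open MvPolynomial

noncomputable def w (d : ℕ) (a : ℕ → ℝ) (α : Fin d →₀ ℕ) : ℝ :=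
  (((∏ j, Nat.factorial (α j) : ℕ) : ℝ) / (Nat.factorial (∑ j, α j)) / a (∑ j, α j) : ℝ)

variable {d N : ℕ} {a : ℕ → ℝ}

lemma w_pos (hap : ∀ k, 0 < a k) (α : Fin d →₀ ℕ) : 0 < w d a α := by
  apply div_pos (div_pos _ _) (hap _)
  · exact_mod_cast Nat.pos_of_ne_zero (Finset.prod_ne_zero_iff.2 fun j _ => Nat.factorial_ne_zero _)
  · exact_mod_cast Nat.factorial_pos _

lemma uiInner_eq_sum_right (d : ℕ) (a : ℕ → ℝ) (p q : MvPolynomial (Fin d) ℂ) :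
    uiInner d a p q = ∑ α ∈ q.support,
      (starRingEnd ℂ) (coeff α p) * coeff α q * ((w d a α : ℝ) : ℂ) := by
  rw [uiInner]
  refine (Finset.sum_subset Finset.subset_union_right fun α _ hα => ?_).symm
  rw [MvPolynomial.notMem_support_iff] at hα
  simp [hα]

lemma uiInner_monomial_right (d : ℕ) (a : ℕ → ℝ) (p : MvPolynomial (Fin d) ℂ)
    (γ : Fin d →₀ ℕ) (c : ℂ) :
    uiInner d a p (monomial γ c) =
      (starRingEnd ℂ) (coeff γ p) * c * ((w d a γ : ℝ) : ℂ) := by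
  classical
  rw [uiInner_eq_sum_right]
  rw [show ((monomial γ) c).support = if c = 0 then ∅ else {γ} from support_monomial]
  split_ifs with h
  · simp [h]
  · simp [coeff_monomial]

lemma uiInner_monomial_left (d : ℕ) (a : ℕ → ℝ) (q : MvPolynomial (Fin d) ℂ)
    (γ : Fin d →₀ ℕ) (c : ℂ) :
    uiInner d a (monomial γ c) q =
      (starRingEnd ℂ) c * coeff γ q * ((w d a γ : ℝ) : ℂ) := by
  classical
  rw [uiInner]
  rw [← Finset.sum_subset (Finset.subset_union_left (s₂ := q.support))
    (fun α _ hα => by rw [MvPolynomial.notMem_support_iff] at hα; simp [hα])]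
  rw [show ((monomial γ) c).support = if c = 0 then ∅ else {γ} from support_monomial]
  split_ifs with h
  · simp [h]
  · simp [coeff_monomial, w]

lemma degF_eq (α : Fin d →₀ ℕ) : (α.sum fun _ e => e) = ∑ j, α j :=
  Finsupp.sum_fintype _ _ fun _ => rfl

lemma totalDegree_monomial_le'' (β : Fin d →₀ ℕ) (c : ℂ) :
    (monomial β c : MvPolynomial (Fin d) ℂ).totalDegree ≤ ∑ j, β j := by
  rw [← degF_eq]
  exact totalDegree_monomial_le β c

lemma coeff_zero_of_lt {p : MvPolynomial (Fin d) ℂ} (hp : p.totalDegree ≤ N)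
    {γ : Fin d →₀ ℕ} (hγ : N < ∑ j, γ j) : coeff γ p = 0 := by
  apply coeff_eq_zero_of_totalDegree_lt
  calc p.totalDegree ≤ N := hp
    _ < ∑ j, γ j := hγ
    _ = ∑ j ∈ γ.support, γ j := by
        refine (Finset.sum_subset (Finset.subset_univ _) fun j _ hj => ?_).symm
        simpa using hj

lemma eq_of_inner (hap : ∀ k, 0 < a k) {r r' : MvPolynomial (Fin d) ℂ}
    (hr : r.totalDegree ≤ N) (hr' : r'.totalDegree ≤ N)
    (h : ∀ γ : Fin d →₀ ℕ, ∑ j, γ j ≤ N →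
      uiInner d a r (monomial γ 1) = uiInner d a r' (monomial γ 1)) : r = r' := by
  ext γ
  rcases le_or_gt (∑ j, γ j) N with hγ | hγ
  · have := h γ hγ
    rw [uiInner_monomial_right, uiInner_monomial_right] at this
    have hw : ((w d a γ : ℝ) : ℂ) ≠ 0 := by
      exact_mod_cast (w_pos hap γ).ne'
    have := mul_right_cancel₀ hw this
    simpa using (starRingEnd ℂ).injective (by simpa using this)
  · rw [coeff_zero_of_lt hr hγ, coeff_zero_of_lt hr' hγ]

lemma homogeneousComponent_monomial' (n : ℕ) (β : Fin d →₀ ℕ) (c : ℂ) :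
    homogeneousComponent n (monomial β c : MvPolynomial (Fin d) ℂ) =
      if (∑ j, β j) = n then monomial β c else 0 := by
  rw [homogeneousComponent_of_mem (n := ∑ j, β j)]
  · split_ifs with h1 h2 h2 <;> first | rfl | omega
  · rw [mem_homogeneousSubmodule]
    exact isHomogeneous_monomial _ (by rw [Finsupp.degree, ← degF_eq]; rfl)

lemma S_monomial (S : Fin d → Module.End ℂ (MvPolynomial (Fin d) ℂ))
    (hS : ∀ (j : Fin d) (p : MvPolynomial (Fin d) ℂ), p.totalDegree ≤ N →
      S j p = ∑ n ∈ Finset.range (N + 1), homogeneousComponent n (X j * p))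
    (j : Fin d) (β : Fin d →₀ ℕ) (c : ℂ) (hβ : ∑ i, β i ≤ N) :
    S j (monomial β c) =
      if (∑ i, β i) + 1 ≤ N then monomial (β + Finsupp.single j 1) c else 0 := by
  rw [hS j _ (le_trans (totalDegree_monomial_le'' β c) hβ)]
  have hX : (X j : MvPolynomial (Fin d) ℂ) * monomial β c
      = monomial (β + Finsupp.single j 1) c := by
    rw [X, monomial_mul]
    rw [add_comm, one_mul]
  rw [hX]
  have hdeg : ∑ i : Fin d, (β + Finsupp.single j 1 : Fin d →₀ ℕ) i = (∑ i, β i) + 1 := by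
    simp only [Finsupp.add_apply, Finset.sum_add_distrib]
    congr 1
    rw [← degF_eq, Finsupp.sum_single_index]
    rfl
  have : ∀ n, homogeneousComponent n (monomial (β + Finsupp.single j 1) c : MvPolynomial (Fin d) ℂ)
      = if (∑ i, β i) + 1 = n then monomial (β + Finsupp.single j 1) c else 0 := by
    intro n; rw [homogeneousComponent_monomial', hdeg]
  simp_rw [this]
  simp only [Finset.sum_ite_eq, Finset.mem_range, Nat.lt_succ_iff]


lemma uiInner_zero_right (d : ℕ) (a : ℕ → ℝ) (p : MvPolynomial (Fin d) ℂ) :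
    uiInner d a p 0 = 0 := by
  rw [uiInner_eq_sum_right]; simp

lemma sum_single_apply_univ (j : Fin d) (k : ℕ) :
    ∑ i : Fin d, (Finsupp.single j k : Fin d →₀ ℕ) i = k := by
  rw [← degF_eq, Finsupp.sum_single_index]; rfl

lemma sum_tsub_add {γ β : Fin d →₀ ℕ} (h : γ ≤ β) :
    ∑ i, (β - γ : Fin d →₀ ℕ) i + ∑ i, γ i = ∑ i, β i := by
  rw [← Finset.sum_add_distrib]
  refine Finset.sum_congr rfl fun i _ => ?_
  rw [Finsupp.tsub_apply]
  have := (Finsupp.le_def.1 h) i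
  omega

lemma sum_tsub_le {γ β : Fin d →₀ ℕ} : ∑ i, (β - γ : Fin d →₀ ℕ) i ≤ ∑ i, β i := by
  refine Finset.sum_le_sum fun i _ => ?_
  rw [Finsupp.tsub_apply]
  exact Nat.sub_le _ _

lemma Sstar_monomial (hap : ∀ k, 0 < a k)
    (S Sstar : Fin d → Module.End ℂ (MvPolynomial (Fin d) ℂ))
    (hS : ∀ (j : Fin d) (p : MvPolynomial (Fin d) ℂ), p.totalDegree ≤ N →
      S j p = ∑ n ∈ Finset.range (N + 1), homogeneousComponent n (X j * p))
    (hSstarMem : ∀ (j : Fin d) (p : MvPolynomial (Fin d) ℂ), p.totalDegree ≤ N →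
      (Sstar j p).totalDegree ≤ N)
    (hSstar : ∀ (j : Fin d) (p q : MvPolynomial (Fin d) ℂ),
      p.totalDegree ≤ N → q.totalDegree ≤ N →
      uiInner d a (Sstar j p) q = uiInner d a p (S j q))
    (j : Fin d) (β : Fin d →₀ ℕ) (c : ℂ) (hβ : ∑ i, β i ≤ N) :
    Sstar j (monomial β c) =
      if 1 ≤ β j then
        ((w d a β / w d a (β - Finsupp.single j 1) : ℝ) : ℂ) •
          monomial (β - Finsupp.single j 1) c
      else 0 := by
  have hmono : (monomial β c : MvPolynomial (Fin d) ℂ).totalDegree ≤ N :=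
    le_trans (totalDegree_monomial_le'' β c) hβ
  refine eq_of_inner hap (hSstarMem j _ hmono) ?_ ?_
  · split_ifs with h
    · refine le_trans (totalDegree_smul_le _ _)
        (le_trans (totalDegree_monomial_le'' _ _) (le_trans sum_tsub_le hβ))
    · simp
  intro γ hγ
  rw [hSstar j _ _ hmono (le_trans (totalDegree_monomial_le'' γ 1) hγ)]
  rw [S_monomial S hS j γ 1 hγ]
  rw [uiInner_monomial_right d a]
  by_cases hbj : 1 ≤ β j
  · have hle : Finsupp.single j 1 ≤ β := Finsupp.single_le_iff.2 hbj
    rw [if_pos hbj, smul_monomial]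
    by_cases hgb : γ = β - Finsupp.single j 1
    · subst hgb
      have hN : ∑ i, (β - Finsupp.single j 1 : Fin d →₀ ℕ) i + 1 ≤ N := by
        have h1 := sum_tsub_add hle
        rw [sum_single_apply_univ] at h1
        omega
      have hadd : (β - Finsupp.single j 1) + Finsupp.single j 1 = β :=
        tsub_add_cancel_of_le hle
      rw [if_pos hN, hadd, uiInner_monomial_left d a, coeff_monomial, if_pos rfl]
      rw [coeff_monomial, if_pos rfl]
      have hwne : w d a (β - Finsupp.single j 1) ≠ 0 := (w_pos hap _).ne'
      have hwc : ((w d a (β - Finsupp.single j 1) : ℝ) : ℂ) ≠ 0 := by exact_mod_cast hwne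
      rw [smul_eq_mul, map_mul, Complex.conj_ofReal, Complex.ofReal_div]
      field_simp
    · rw [coeff_monomial,
        if_neg (show ¬(β - Finsupp.single j 1 = γ) from fun h => hgb h.symm)]
      split_ifs with hN
      · rw [uiInner_monomial_left d a, coeff_monomial]
        rw [if_neg (fun h : γ + Finsupp.single j 1 = β => by
          apply hgb
          rw [← h, add_tsub_cancel_right])]
        simp
      · rw [uiInner_zero_right]; simp
  · rw [if_neg hbj]
    rw [coeff_zero]
    split_ifs with hN
    · rw [uiInner_monomial_left d a, coeff_monomial]
      rw [if_neg (fun h : γ + Finsupp.single j 1 = β => by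
        apply hbj
        have := congrArg (fun f : Fin d →₀ ℕ => f j) h
        simp only [Finsupp.add_apply, Finsupp.single_eq_same] at this
        omega)]
      simp
    · rw [uiInner_zero_right]; simp


/-- `T` acts on monomials of degree ≤ N as the weighted lowering operator by `γ`. -/
def Lowers (N : ℕ) (a : ℕ → ℝ) (T : Module.End ℂ (MvPolynomial (Fin d) ℂ))
    (γ : Fin d →₀ ℕ) : Prop :=
  ∀ (β : Fin d →₀ ℕ) (c : ℂ), (∑ j, β j) ≤ N →
    T (monomial β c) = if γ ≤ β then
      ((w d a β / w d a (β - γ) : ℝ) : ℂ) • monomial (β - γ) c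
    else 0

/-- `T` acts on monomials as the raising operator by `γ`, truncated at degree N. -/
def Raises (N : ℕ) (T : Module.End ℂ (MvPolynomial (Fin d) ℂ))
    (γ : Fin d →₀ ℕ) : Prop :=
  ∀ (β : Fin d →₀ ℕ) (c : ℂ), (∑ j, β j) ≤ N →
    T (monomial β c) = if (∑ j, β j) + (∑ j, γ j) ≤ N then monomial (β + γ) c else 0

lemma add_le_iff_tsub (γ γ' β : Fin d →₀ ℕ) : γ + γ' ≤ β ↔ γ' ≤ β ∧ γ ≤ β - γ' := by
  simp only [Finsupp.le_def, Finsupp.add_apply, Finsupp.tsub_apply]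
  constructor
  · intro h
    exact ⟨fun i => by have := h i; omega, fun i => by have := h i; omega⟩
  · rintro ⟨h1, h2⟩ i
    have := h1 i; have := h2 i; omega

lemma lowers_one (hap : ∀ k, 0 < a k) : Lowers (d := d) N a 1 0 := by
  intro β c _
  rw [if_pos (zero_le : (0 : Fin d →₀ ℕ) ≤ β)]
  rw [tsub_zero, div_self (w_pos hap β).ne']
  simp

lemma lowers_mul (hap : ∀ k, 0 < a k) {T T' : Module.End ℂ (MvPolynomial (Fin d) ℂ)}
    {γ γ' : Fin d →₀ ℕ} (h : Lowers N a T γ) (h' : Lowers N a T' γ') :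
    Lowers N a (T * T') (γ + γ') := by
  intro β c hβ
  rw [Module.End.mul_apply, h' β c hβ]
  by_cases h1 : γ' ≤ β
  · rw [if_pos h1, map_smul, h (β - γ') c (le_trans sum_tsub_le hβ)]
    by_cases h2 : γ ≤ β - γ'
    · rw [if_pos h2, if_pos ((add_le_iff_tsub γ γ' β).2 ⟨h1, h2⟩)]
      rw [smul_smul, tsub_tsub, add_comm γ' γ]
      congr 2
      have hwne : w d a (β - γ') ≠ 0 := (w_pos hap _).ne'
      push_cast
      rw [div_mul_div_cancel₀]
      exact_mod_cast hwne
    · rw [if_neg h2, if_neg (fun hc => h2 (((add_le_iff_tsub γ γ' β).1 hc).2))]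
      simp
  · rw [if_neg h1, if_neg (fun hc => h1 (((add_le_iff_tsub γ γ' β).1 hc).1))]
    simp

lemma lowers_pow (hap : ∀ k, 0 < a k) {T : Module.End ℂ (MvPolynomial (Fin d) ℂ)}
    {γ : Fin d →₀ ℕ} (h : Lowers N a T γ) (k : ℕ) : Lowers N a (T ^ k) (k • γ) := by
  induction k with
  | zero => rw [pow_zero, zero_smul]; exact lowers_one hap
  | succ k ih =>
    rw [pow_succ, succ_nsmul]
    exact lowers_mul hap ih h

lemma lowers_list (hap : ∀ k, 0 < a k)
    (A : List ((Module.End ℂ (MvPolynomial (Fin d) ℂ)) × (Fin d →₀ ℕ)))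
    (hA : ∀ x ∈ A, Lowers N a x.1 x.2) :
    Lowers N a (A.map Prod.fst).prod (A.map Prod.snd).sum := by
  induction A with
  | nil => simpa using lowers_one hap
  | cons x A ih =>
    simp only [List.map_cons, List.prod_cons, List.sum_cons]
    exact lowers_mul hap (hA x List.mem_cons_self)
      (ih fun y hy => hA y (List.mem_cons_of_mem x hy))

lemma raises_one : Raises (d := d) N 1 0 := by
  intro β c hβ
  rw [if_pos (by simpa using hβ)]
  simp

lemma raises_mul {T T' : Module.End ℂ (MvPolynomial (Fin d) ℂ)}
    {γ γ' : Fin d →₀ ℕ} (h : Raises N T γ) (h' : Raises N T' γ') :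
    Raises N (T * T') (γ + γ') := by
  intro β c hβ
  rw [Module.End.mul_apply, h' β c hβ]
  have hsum : ∑ j, (β + γ' : Fin d →₀ ℕ) j = ∑ j, β j + ∑ j, γ' j := by
    simp [Finsupp.add_apply, Finset.sum_add_distrib]
  have hsum2 : ∑ j, (γ + γ' : Fin d →₀ ℕ) j = ∑ j, γ j + ∑ j, γ' j := by
    simp [Finsupp.add_apply, Finset.sum_add_distrib]
  by_cases h1 : ∑ j, β j + ∑ j, γ' j ≤ N
  · rw [if_pos h1, h (β + γ') c (by omega)]
    rw [hsum, hsum2]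
    by_cases h2 : ∑ j, β j + ∑ j, γ' j + ∑ j, γ j ≤ N
    · rw [if_pos h2, if_pos (by omega)]
      congr 1
      rw [add_assoc, add_comm γ' γ]
    · rw [if_neg h2, if_neg (by omega)]
  · rw [if_neg h1, hsum2, if_neg (by omega)]
    simp

lemma raises_pow {T : Module.End ℂ (MvPolynomial (Fin d) ℂ)}
    {γ : Fin d →₀ ℕ} (h : Raises N T γ) (k : ℕ) : Raises N (T ^ k) (k • γ) := by
  induction k with
  | zero => rw [pow_zero, zero_smul]; exact raises_one
  | succ k ih =>
    rw [pow_succ, succ_nsmul]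
    exact raises_mul ih h

lemma raises_list (A : List ((Module.End ℂ (MvPolynomial (Fin d) ℂ)) × (Fin d →₀ ℕ)))
    (hA : ∀ x ∈ A, Raises N x.1 x.2) :
    Raises N (A.map Prod.fst).prod (A.map Prod.snd).sum := by
  induction A with
  | nil => simpa using raises_one
  | cons x A ih =>
    simp only [List.map_cons, List.prod_cons, List.sum_cons]
    exact raises_mul (hA x List.mem_cons_self)
      (ih fun y hy => hA y (List.mem_cons_of_mem x hy))


section Ops

variable (hap : ∀ k, 0 < a k)
variable (S Sstar : Fin d → Module.End ℂ (MvPolynomial (Fin d) ℂ))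
variable (hS : ∀ (j : Fin d) (p : MvPolynomial (Fin d) ℂ), p.totalDegree ≤ N →
      S j p = ∑ n ∈ Finset.range (N + 1), homogeneousComponent n (X j * p))
variable (hSstarMem : ∀ (j : Fin d) (p : MvPolynomial (Fin d) ℂ), p.totalDegree ≤ N →
      (Sstar j p).totalDegree ≤ N)
variable (hSstar : ∀ (j : Fin d) (p q : MvPolynomial (Fin d) ℂ),
      p.totalDegree ≤ N → q.totalDegree ≤ N →
      uiInner d a (Sstar j p) q = uiInner d a p (S j q))

include hap hS hSstarMem hSstar in
lemma lowers_Sstar (j : Fin d) : Lowers N a (Sstar j) (Finsupp.single j 1) := by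
  intro β c hβ
  rw [Sstar_monomial hap S Sstar hS hSstarMem hSstar j β c hβ]
  by_cases h : 1 ≤ β j
  · rw [if_pos h, if_pos (Finsupp.single_le_iff.2 h)]
  · rw [if_neg h, if_neg (fun hc => h (Finsupp.single_le_iff.1 hc))]

include hS in
lemma raises_S (j : Fin d) : Raises N (S j) (Finsupp.single j 1) := by
  intro β c hβ
  rw [S_monomial S hS j β c hβ, sum_single_apply_univ]

lemma sumsingle_apply (α : Fin d → ℕ) (i : Fin d) :
    (∑ j, Finsupp.single j (α j) : Fin d →₀ ℕ) i = α i := by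
  rw [Finset.sum_apply']
  simp [Finsupp.single_apply]

lemma sumsingle_sum (α : Fin d → ℕ) :
    ∑ i, (∑ j, Finsupp.single j (α j) : Fin d →₀ ℕ) i = ∑ j, α j :=
  Finset.sum_congr rfl fun i _ => sumsingle_apply α i

lemma sumsingle_le_iff (α : Fin d → ℕ) (β : Fin d →₀ ℕ) :
    (∑ j, Finsupp.single j (α j) : Fin d →₀ ℕ) ≤ β ↔ ∀ i, α i ≤ β i := by
  simp only [Finsupp.le_def, sumsingle_apply]

include hap hS hSstarMem hSstar in
lemma lowers_prod (α : Fin d → ℕ) :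
    Lowers N a (List.ofFn fun j => Sstar j ^ α j).prod (∑ j, Finsupp.single j (α j)) := by
  have h := lowers_list hap (List.ofFn fun j => (Sstar j ^ α j, Finsupp.single j (α j)))
    (fun x hx => by
      rw [List.mem_ofFn] at hx
      obtain ⟨j, rfl⟩ := hx
      have h1 : Lowers N a (Sstar j ^ α j) (α j • Finsupp.single j 1) :=
        lowers_pow hap (lowers_Sstar hap S Sstar hS hSstarMem hSstar j) (α j)
      rwa [Finsupp.smul_single, smul_eq_mul, mul_one] at h1)
  rwa [List.map_ofFn, List.map_ofFn, List.sum_ofFn, Function.comp_def, Function.comp_def] at h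

include hS in
lemma raises_prod (α : Fin d → ℕ) :
    Raises N (List.ofFn fun j => S j ^ α j).prod (∑ j, Finsupp.single j (α j)) := by
  have h := raises_list (List.ofFn fun j => (S j ^ α j, Finsupp.single j (α j)))
    (fun x hx => by
      rw [List.mem_ofFn] at hx
      obtain ⟨j, rfl⟩ := hx
      have h1 : Raises N (S j ^ α j) (α j • Finsupp.single j 1) :=
        raises_pow (raises_S S hS j) (α j)
      rwa [Finsupp.smul_single, smul_eq_mul, mul_one] at h1)
  rwa [List.map_ofFn, List.map_ofFn, List.sum_ofFn, Function.comp_def, Function.comp_def] at h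

end Ops


lemma vand_piAntidiag {ι : Type*} [DecidableEq ι] (s : Finset ι) (β : ι → ℕ) (n : ℕ) :
    ∑ α ∈ s.piAntidiag n, ∏ j ∈ s, (β j).choose (α j) = (∑ j ∈ s, β j).choose n := by
  induction s using Finset.cons_induction generalizing n with
  | empty =>
    rcases Nat.eq_zero_or_pos n with rfl | hn
    · simp
    · rw [Finset.piAntidiag_empty_of_ne_zero hn.ne']
      simp [Nat.choose_eq_zero_of_lt hn]
  | cons i s hi ih =>
    rw [Finset.piAntidiag_cons hi n, Finset.sum_disjiUnion]
    rw [Finset.sum_cons, Nat.add_choose_eq]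
    refine Finset.sum_congr rfl fun p hp => ?_
    rw [Finset.sum_map]
    rw [← ih p.2, Finset.mul_sum]
    refine Finset.sum_congr rfl fun g hg => ?_
    simp only [Finset.mem_piAntidiag] at hg
    have hgi : g i = 0 := by
      by_contra h
      exact hi (hg.2 i h)
    rw [Finset.prod_cons]
    simp only [Function.Embedding.coeFn_mk, addRightEmbedding_apply]
    congr 1
    · simp [hgi]
    · refine Finset.prod_congr rfl fun j hj => ?_
      have : j ≠ i := fun h => hi (h ▸ hj)
      simp [this]

lemma vand_tuple (d : ℕ) (β : Fin d → ℕ) (n : ℕ) :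
    ∑ α ∈ Finset.Nat.antidiagonalTuple d n, ∏ j, (β j).choose (α j) = (∑ j, β j).choose n := by
  rw [← Finset.piAntidiag_univ_fin_eq_antidiagonalTuple]
  exact vand_piAntidiag _ _ _

lemma nat_key (α β : Fin d → ℕ) (h : ∀ j, α j ≤ β j) :
    Nat.multinomial Finset.univ α * ∏ j, (β j).factorial =
      (∑ j, α j).factorial * (∏ j, (β j).choose (α j)) * ∏ j, (β j - α j).factorial := by
  have h1 : ∏ j, (β j).factorial
      = ∏ j, ((β j).choose (α j) * (α j).factorial * (β j - α j).factorial) :=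
    Finset.prod_congr rfl fun j _ => (Nat.choose_mul_factorial_mul_factorial (h j)).symm
  rw [h1, ← Nat.multinomial_spec]
  rw [Finset.prod_mul_distrib, Finset.prod_mul_distrib]
  ring

lemma scalar_sum (hap : ∀ k, 0 < a k) (n : ℕ) (β : Fin d →₀ ℕ) :
    ∑ α ∈ Finset.Nat.antidiagonalTuple d n, (Nat.multinomial Finset.univ α : ℝ) *
      (if (∑ j, Finsupp.single j (α j) : Fin d →₀ ℕ) ≤ β then
        w d a β / w d a (β - ∑ j, Finsupp.single j (α j)) else 0)
    = if n ≤ ∑ i, β i then a (∑ i, β i - n) / a (∑ i, β i) else 0 := by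
  have hterm : ∀ α ∈ Finset.Nat.antidiagonalTuple d n,
      (Nat.multinomial Finset.univ α : ℝ) *
        (if (∑ j, Finsupp.single j (α j) : Fin d →₀ ℕ) ≤ β then
          w d a β / w d a (β - ∑ j, Finsupp.single j (α j)) else 0)
      = ((∏ j, (β j).choose (α j) : ℕ) : ℝ) *
        ((n.factorial : ℝ) * (((∑ i, β i - n).factorial : ℝ) * a (∑ i, β i - n)) /
          (((∑ i, β i).factorial : ℝ) * a (∑ i, β i))) := by
    intro α hα
    have hn : ∑ j, α j = n := Finset.Nat.mem_antidiagonalTuple.1 hα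
    by_cases hcond : (∑ j, Finsupp.single j (α j) : Fin d →₀ ℕ) ≤ β
    · have hpt : ∀ i, α i ≤ β i := (sumsingle_le_iff α β).1 hcond
      have hnm : n ≤ ∑ i, β i := hn ▸ (Finset.sum_le_sum fun i _ => hpt i)
      have happ : ∀ i, ((β - ∑ j, Finsupp.single j (α j) : Fin d →₀ ℕ)) i = β i - α i :=
        fun i => by rw [Finsupp.tsub_apply, sumsingle_apply]
      have hsub : ∑ i, ((β - ∑ j, Finsupp.single j (α j) : Fin d →₀ ℕ)) i = ∑ i, β i - n := by
        have h2 := sum_tsub_add hcond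
        rw [sumsingle_sum, hn] at h2
        omega
      have hprodR : ∏ i, (((β - ∑ j, Finsupp.single j (α j) : Fin d →₀ ℕ)) i).factorial
          = ∏ i, (β i - α i).factorial :=
        Finset.prod_congr rfl fun i _ => by rw [happ i]
      rw [if_pos hcond, w, w, hsub, hprodR]
      have hkey := nat_key α (fun j => β j) hpt
      rw [hn] at hkey
      have hkeyR : (Nat.multinomial Finset.univ α : ℝ) * ((∏ j, (β j).factorial : ℕ) : ℝ)
          = ((n.factorial : ℕ) : ℝ) * ((∏ j, (β j).choose (α j) : ℕ) : ℝ) *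
            ((∏ j, (β j - α j).factorial : ℕ) : ℝ) := by exact_mod_cast congrArg Nat.cast hkey
      have h1 : ((∑ i, β i).factorial : ℝ) ≠ 0 := by exact_mod_cast (Nat.factorial_pos _).ne'
      have h2 : ((∑ i, β i - n).factorial : ℝ) ≠ 0 := by exact_mod_cast (Nat.factorial_pos _).ne'
      have h3 : a (∑ i, β i) ≠ 0 := (hap _).ne'
      have h4 : a (∑ i, β i - n) ≠ 0 := (hap _).ne'
      have h5 : ((∏ j, (β j - α j).factorial : ℕ) : ℝ) ≠ 0 := by
        exact_mod_cast Nat.pos_of_ne_zero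
          (Finset.prod_ne_zero_iff.2 fun j _ => Nat.factorial_ne_zero _) |>.ne'
      push_cast at hkeyR ⊢
      field_simp
      linear_combination hkeyR
    · rw [if_neg hcond]
      obtain ⟨i, hi⟩ : ∃ i, ¬ α i ≤ β i := by
        by_contra h
        push_neg at h
        exact hcond ((sumsingle_le_iff α β).2 h)
      have hzero : ∏ j, (β j).choose (α j) = 0 :=
        Finset.prod_eq_zero (Finset.mem_univ i) (Nat.choose_eq_zero_of_lt (lt_of_not_ge hi))
      rw [hzero]
      simp
  rw [Finset.sum_congr rfl hterm, ← Finset.sum_mul]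
  have : ∑ α ∈ Finset.Nat.antidiagonalTuple d n, ((∏ j, (β j).choose (α j) : ℕ) : ℝ)
      = (((∑ i, β i).choose n : ℕ) : ℝ) := by
    rw [← Nat.cast_sum]
    exact_mod_cast congrArg Nat.cast (vand_tuple d (fun j => β j) n)
  rw [this]
  by_cases hnm : n ≤ ∑ i, β i
  · rw [if_pos hnm]
    have hc := Nat.choose_mul_factorial_mul_factorial hnm
    have hcR : (((∑ i, β i).choose n : ℕ) : ℝ) * (n.factorial : ℝ) * ((∑ i, β i - n).factorial : ℝ)
        = ((∑ i, β i).factorial : ℝ) := by exact_mod_cast congrArg Nat.cast hc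
    have h1 : ((∑ i, β i).factorial : ℝ) ≠ 0 := by exact_mod_cast (Nat.factorial_pos _).ne'
    have h3 : a (∑ i, β i) ≠ 0 := (hap _).ne'
    push_cast at hcR ⊢
    field_simp
    linear_combination a (∑ i, β i - n) * hcR
  · rw [if_neg hnm, Nat.choose_eq_zero_of_lt (lt_of_not_ge hnm)]
    simp


section Key

variable (hap : ∀ k, 0 < a k)
variable (S Sstar : Fin d → Module.End ℂ (MvPolynomial (Fin d) ℂ))
variable (hS : ∀ (j : Fin d) (p : MvPolynomial (Fin d) ℂ), p.totalDegree ≤ N →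
      S j p = ∑ n ∈ Finset.range (N + 1), homogeneousComponent n (X j * p))
variable (hSstarMem : ∀ (j : Fin d) (p : MvPolynomial (Fin d) ℂ), p.totalDegree ≤ N →
      (Sstar j p).totalDegree ≤ N)
variable (hSstar : ∀ (j : Fin d) (p q : MvPolynomial (Fin d) ℂ),
      p.totalDegree ≤ N → q.totalDegree ≤ N →
      uiInner d a (Sstar j p) q = uiInner d a p (S j q))

include hap hS hSstarMem hSstar in
lemma key_sum (n : ℕ) (β : Fin d →₀ ℕ) (c : ℂ) (hβ : ∑ i, β i ≤ N) :
    ∑ α ∈ Finset.Nat.antidiagonalTuple d n, (Nat.multinomial Finset.univ α : ℂ) •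
      ((List.ofFn fun j => S j ^ α j).prod
        ((List.ofFn fun j => Sstar j ^ α j).prod (monomial β c)))
    = (((if n ≤ ∑ i, β i then a (∑ i, β i - n) / a (∑ i, β i) else 0 : ℝ)) : ℂ) •
        monomial β c := by
  have hterm : ∀ α ∈ Finset.Nat.antidiagonalTuple d n,
      (Nat.multinomial Finset.univ α : ℂ) •
        ((List.ofFn fun j => S j ^ α j).prod
          ((List.ofFn fun j => Sstar j ^ α j).prod (monomial β c)))
      = (((Nat.multinomial Finset.univ α : ℝ) *
          (if (∑ j, Finsupp.single j (α j) : Fin d →₀ ℕ) ≤ β then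
            w d a β / w d a (β - ∑ j, Finsupp.single j (α j)) else 0) : ℝ) : ℂ) •
          monomial β c := by
    intro α hα
    have hL := lowers_prod hap S Sstar hS hSstarMem hSstar α β c hβ
    rw [hL]
    by_cases hcond : (∑ j, Finsupp.single j (α j) : Fin d →₀ ℕ) ≤ β
    · rw [if_pos hcond, map_smul]
      rw [raises_prod S hS α (β - ∑ j, Finsupp.single j (α j)) c (le_trans sum_tsub_le hβ)]
      rw [if_pos (by rw [sum_tsub_add hcond]; exact hβ)]
      rw [tsub_add_cancel_of_le hcond, smul_smul]
      congr 1
      rw [if_pos hcond]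
      push_cast
      ring
    · rw [if_neg hcond, map_zero, smul_zero, if_neg hcond, mul_zero]
      simp
  rw [Finset.sum_congr rfl hterm, ← Finset.sum_smul]
  congr 1
  rw [← Complex.ofReal_sum, scalar_sum hap n β]

end Key

end Stmt18Aux


open Stmt18Aux MvPolynomial

/-- Let `S` be the compression of the multiplication tuple `M_z` to the space of
polynomials of degree at most `N` (with the unitarily invariant inner product with
weights `aₙ`), and let `Sstar` be its adjoint there. If `aₘ = ∑_{n=1}^m bₙ a_{m-n}`
for `m ≥ 1`, then `I - ∑_{n=1}^N bₙ ∑_{|α|=n} (n!/α!) Sᵅ (S*)ᵅ` is the orthogonal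
projection onto the constants; in particular it is positive semidefinite. -/
theorem stmt_18 (d N : ℕ) (a b : ℕ → ℝ) (ha0 : a 0 = 1) (hap : ∀ k, 0 < a k)
    (hconv : ∀ m : ℕ, 1 ≤ m → a m = ∑ n ∈ Finset.Icc 1 m, b n * a (m - n))
    (S Sstar : Fin d → Module.End ℂ (MvPolynomial (Fin d) ℂ))
    (hS : ∀ (j : Fin d) (p : MvPolynomial (Fin d) ℂ), p.totalDegree ≤ N →
      S j p = ∑ n ∈ Finset.range (N + 1),
        MvPolynomial.homogeneousComponent n (MvPolynomial.X j * p))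
    (hSstarMem : ∀ (j : Fin d) (p : MvPolynomial (Fin d) ℂ), p.totalDegree ≤ N →
      (Sstar j p).totalDegree ≤ N)
    (hSstar : ∀ (j : Fin d) (p q : MvPolynomial (Fin d) ℂ),
      p.totalDegree ≤ N → q.totalDegree ≤ N →
      uiInner d a (Sstar j p) q = uiInner d a p (S j q)) :
    ∀ p : MvPolynomial (Fin d) ℂ, p.totalDegree ≤ N →
      (p - ∑ n ∈ Finset.Icc 1 N, ((b n : ℝ) : ℂ) •
          ∑ α ∈ Finset.Nat.antidiagonalTuple d n,
            (Nat.multinomial Finset.univ α : ℂ) •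
              ((List.ofFn fun j => S j ^ α j).prod
                ((List.ofFn fun j => Sstar j ^ α j).prod p))
        = MvPolynomial.homogeneousComponent 0 p) ∧
      0 ≤ uiInner d a
          (p - ∑ n ∈ Finset.Icc 1 N, ((b n : ℝ) : ℂ) •
            ∑ α ∈ Finset.Nat.antidiagonalTuple d n,
              (Nat.multinomial Finset.univ α : ℂ) •
                ((List.ofFn fun j => S j ^ α j).prod
                  ((List.ofFn fun j => Sstar j ^ α j).prod p))) p := by
  intro p hp
  have hmain : p - ∑ n ∈ Finset.Icc 1 N, ((b n : ℝ) : ℂ) •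
      ∑ α ∈ Finset.Nat.antidiagonalTuple d n,
        (Nat.multinomial Finset.univ α : ℂ) •
          ((List.ofFn fun j => S j ^ α j).prod
            ((List.ofFn fun j => Sstar j ^ α j).prod p))
      = MvPolynomial.homogeneousComponent 0 p := by
    -- package the big sum as an endomorphism
    set T : Module.End ℂ (MvPolynomial (Fin d) ℂ) :=
      ∑ n ∈ Finset.Icc 1 N, ((b n : ℝ) : ℂ) •
        ∑ α ∈ Finset.Nat.antidiagonalTuple d n,
          (Nat.multinomial Finset.univ α : ℂ) •
            ((List.ofFn fun j => S j ^ α j).prod *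
              (List.ofFn fun j => Sstar j ^ α j).prod) with hT
    have happly : ∀ q : MvPolynomial (Fin d) ℂ, T q =
        ∑ n ∈ Finset.Icc 1 N, ((b n : ℝ) : ℂ) •
          ∑ α ∈ Finset.Nat.antidiagonalTuple d n,
            (Nat.multinomial Finset.univ α : ℂ) •
              ((List.ofFn fun j => S j ^ α j).prod
                ((List.ofFn fun j => Sstar j ^ α j).prod q)) := by
      intro q
      rw [hT]
      simp only [LinearMap.sum_apply, LinearMap.smul_apply, Module.End.mul_apply]
    have hTmono : ∀ (β : Fin d →₀ ℕ) (c : ℂ), ∑ i, β i ≤ N →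
        T (monomial β c) = if 1 ≤ ∑ i, β i then monomial β c else 0 := by
      intro β c hβ
      rw [happly]
      have hky : ∀ n ∈ Finset.Icc 1 N,
          ((b n : ℝ) : ℂ) • ∑ α ∈ Finset.Nat.antidiagonalTuple d n,
            (Nat.multinomial Finset.univ α : ℂ) •
              ((List.ofFn fun j => S j ^ α j).prod
                ((List.ofFn fun j => Sstar j ^ α j).prod (monomial β c)))
          = (((b n * if n ≤ ∑ i, β i then a (∑ i, β i - n) / a (∑ i, β i) else 0 : ℝ)) : ℂ) •
              monomial β c := by
        intro n _
        rw [key_sum hap S Sstar hS hSstarMem hSstar n β c hβ, smul_smul]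
        push_cast
        ring_nf
      rw [Finset.sum_congr rfl hky, ← Finset.sum_smul]
      have hscal : ∑ n ∈ Finset.Icc 1 N,
          (((b n * if n ≤ ∑ i, β i then a (∑ i, β i - n) / a (∑ i, β i) else 0 : ℝ)) : ℂ)
          = if 1 ≤ ∑ i, β i then 1 else 0 := by
        rw [← Complex.ofReal_sum]
        by_cases hm : 1 ≤ ∑ i, β i
        · rw [if_pos hm]
          rw [← Finset.sum_subset (Finset.Icc_subset_Icc_right hβ :
              Finset.Icc 1 (∑ i, β i) ⊆ Finset.Icc 1 N) (fun n hn1 hn2 => by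
            rw [Finset.mem_Icc] at hn1 hn2
            rw [if_neg (by omega), mul_zero])]
          have : ∀ n ∈ Finset.Icc 1 (∑ i, β i),
              b n * (if n ≤ ∑ i, β i then a (∑ i, β i - n) / a (∑ i, β i) else 0)
              = b n * a (∑ i, β i - n) / a (∑ i, β i) := by
            intro n hn
            rw [Finset.mem_Icc] at hn
            rw [if_pos hn.2, mul_div_assoc]
          rw [Finset.sum_congr rfl this, ← Finset.sum_div, ← hconv _ hm,
            div_self (hap _).ne']
          norm_num
        · rw [if_neg hm]
          rw [Finset.sum_congr rfl (fun n hn => ?_), Finset.sum_const_zero]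
          · norm_num
          · rw [Finset.mem_Icc] at hn
            rw [if_neg (by omega), mul_zero]
      rw [hscal]
      split_ifs <;> simp
    -- decompose p into monomials
    have hrepr : p - T p = ∑ β ∈ p.support,
        (monomial β (MvPolynomial.coeff β p) - T (monomial β (MvPolynomial.coeff β p))) := by
      rw [Finset.sum_sub_distrib, ← map_sum, ← MvPolynomial.as_sum]
    have hterm2 : ∀ β ∈ p.support,
        monomial β (MvPolynomial.coeff β p) - T (monomial β (MvPolynomial.coeff β p))
        = MvPolynomial.homogeneousComponent 0 (monomial β (MvPolynomial.coeff β p)) := by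
      intro β hβmem
      have hdeg : ∑ i, β i ≤ N := by
        rw [← degF_eq]
        exact le_trans (MvPolynomial.le_totalDegree hβmem) hp
      rw [hTmono β _ hdeg, homogeneousComponent_monomial']
      by_cases h : ∑ i, β i = 0
      · rw [if_neg (by omega), if_pos h, sub_zero]
      · rw [if_pos (by omega), if_neg h, sub_self]
    rw [show (∑ n ∈ Finset.Icc 1 N, ((b n : ℝ) : ℂ) •
          ∑ α ∈ Finset.Nat.antidiagonalTuple d n,
            (Nat.multinomial Finset.univ α : ℂ) •
              ((List.ofFn fun j => S j ^ α j).prod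
                ((List.ofFn fun j => Sstar j ^ α j).prod p))) = T p from (happly p).symm]
    rw [hrepr, Finset.sum_congr rfl hterm2, ← map_sum, ← MvPolynomial.as_sum]
  refine ⟨hmain, ?_⟩
  rw [hmain]
  rw [MvPolynomial.homogeneousComponent_zero, MvPolynomial.C_apply, uiInner_monomial_left]
  have hw0 : w d a 0 = 1 := by
    simp [w, ha0]
  rw [hw0]
  rw [starRingEnd_apply]
  simpa using star_mul_self_nonneg (MvPolynomial.coeff 0 p)
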